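/- Let m ≥ 1, let d ∈ {8,12,16,...}, set α = (d−2)/2, and let C : [0,π] → ℝ^{m×m} be a symmetric-matrix-valued function with continuous entries. If H_n^{(α,1)}(C) is positive semidefinite for every n ∈ ℕ₀ and Σ_{n=1}^∞ n^{α+1} H_n^{(α,1)}(C) converges entrywise, then H_n^{(α,α)}(C) is positive semidefinite for every n ∈ ℕ₀ and Σ_{n=1}^∞ n^{α+1} H_n^{(α,α)}(C) converges entrywise. (By Theorem 1 this says: an isotropic covariance matrix function on the quaternionic projective space P^d(ℍ) is an isotropic covariance matrix function on the sphere S^d.) -/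

import Mathlib

open Filter Matrix

/-- Jacobi polynomial `P_n^{(α,β)}(x)`. -/
noncomputable def jacobiP (α β : ℝ) (n : ℕ) (x : ℝ) : ℝ :=
  (1 / (n.factorial : ℝ)) * ∑ k ∈ Finset.range (n + 1),
    (n.choose k : ℝ) * (∏ i ∈ Finset.Icc (k + 1) n, (α + (i : ℝ))) *
      (∏ j ∈ Finset.Icc 1 k, (α + β + (n : ℝ) + (j : ℝ))) * ((x - 1) / 2) ^ k

/-- The matrix `H_n^{(α,β)}(C)`, defined entrywise by an interval integral. -/
noncomputable def Hmat {m : ℕ} (α β : ℝ) (C : ℝ → Matrix (Fin m) (Fin m) ℝ) (n : ℕ) :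
    Matrix (Fin m) (Fin m) ℝ :=
  Matrix.of fun i j => ∫ θ in (0:ℝ)..Real.pi,
    C θ i j * jacobiP α β n (Real.cos θ) *
      (Real.sin (θ / 2)) ^ (2 * α + 1) * (Real.cos (θ / 2)) ^ (2 * β + 1)

/-- Positive semidefiniteness in the quadratic-form sense. -/
def PSD {m : ℕ} (A : Matrix (Fin m) (Fin m) ℝ) : Prop :=
  ∀ v : Fin m → ℝ, 0 ≤ v ⬝ᵥ A.mulVec v

/-- The series `Σ_{n=0}^∞ f n` converges (partial sums) to `L`. -/
def SeriesTo (f : ℕ → ℝ) (L : ℝ) : Prop :=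
  Filter.Tendsto (fun N => ∑ n ∈ Finset.range N, f n) Filter.atTop (nhds L)

/-- The series `Σ_{n=0}^∞ f n` converges. -/
def SeriesConv (f : ℕ → ℝ) : Prop := ∃ L, SeriesTo f L

lemma prod_shift (c : ℝ) (j : ℕ) :
    ∏ l ∈ Finset.Icc 1 (j + 1), (c + (l : ℝ)) =
      (c + 1) * ∏ l ∈ Finset.Icc 1 j, ((c + 1) + (l : ℝ)) := by
  induction j with
  | zero => simp
  | succ j ih =>
    rw [Finset.prod_Icc_succ_top (by omega), ih, Finset.prod_Icc_succ_top (by omega)]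
    push_cast
    ring

-- coefficient identity, successor case
lemma coefIdS (a b : ℝ) (n j : ℕ) (hj : j ≤ n) :
    (a + b + 2*n + 2) *
      ((n.choose (j+1) : ℝ) * (∏ i ∈ Finset.Icc (j+2) n, (a + (i:ℝ))) *
          (∏ l ∈ Finset.Icc 1 (j+1), (a + b + 1 + n + (l:ℝ)))
        + (n.choose j : ℝ) * (∏ i ∈ Finset.Icc (j+1) n, (a + (i:ℝ))) *
          (∏ l ∈ Finset.Icc 1 j, (a + b + 1 + n + (l:ℝ))))
    = (b + n + 1) * ((n.choose (j+1) : ℝ) * (∏ i ∈ Finset.Icc (j+2) n, (a + (i:ℝ))) *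
          (∏ l ∈ Finset.Icc 1 (j+1), (a + b + n + (l:ℝ))))
      + ((n+1).choose (j+1) : ℝ) * (∏ i ∈ Finset.Icc (j+2) (n+1), (a + (i:ℝ))) *
          (∏ l ∈ Finset.Icc 1 (j+1), (a + b + (n+1) + (l:ℝ))) := by
  have hch : ((j:ℝ) + 1) * (n.choose (j+1) : ℝ) = ((n:ℝ) - (j:ℝ)) * (n.choose j : ℝ) := by
    have := Nat.choose_succ_right_eq n j
    have h2 := congrArg (Nat.cast (R := ℝ)) this
    push_cast [Nat.cast_sub hj] at h2
    linarith
  have hQm : ∏ l ∈ Finset.Icc 1 (j+1), (a + b + n + (l:ℝ)) =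
      (a + b + n + 1) * ∏ l ∈ Finset.Icc 1 j, (a + b + 1 + n + (l:ℝ)) := by
    rw [prod_shift (a + b + (n:ℝ)) j]
    ring_nf
  have hQ : ∏ l ∈ Finset.Icc 1 (j+1), (a + b + 1 + n + (l:ℝ)) =
      (∏ l ∈ Finset.Icc 1 j, (a + b + 1 + n + (l:ℝ))) * (a + b + 1 + n + (j+1)) := by
    rw [Finset.prod_Icc_succ_top (by omega)]
    push_cast; ring_nf
  have hQ3 : ∏ l ∈ Finset.Icc 1 (j+1), (a + b + ((n:ℝ)+1) + (l:ℝ)) =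
      ∏ l ∈ Finset.Icc 1 (j+1), (a + b + 1 + n + (l:ℝ)) := by
    apply Finset.prod_congr rfl; intro l _; ring
  have hcc : (((n+1).choose (j+1) : ℕ) : ℝ) = (n.choose j : ℝ) + (n.choose (j+1) : ℝ) := by
    rw [Nat.choose_succ_succ]; push_cast; ring
  rcases Nat.lt_or_ge j n with hlt | hge
  · have hP1 : ∏ i ∈ Finset.Icc (j+1) n, (a + (i:ℝ)) =
        (a + ((j:ℝ)+1)) * ∏ i ∈ Finset.Icc (j+2) n, (a + (i:ℝ)) := by
      have he : Finset.Icc (j+1) n = insert (j+1) (Finset.Icc (j+2) n) := by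
        conv_rhs => rw [show j + 2 = (j+1) + 1 from rfl, Finset.Icc_add_one_left_eq_Ioc]
        exact (Finset.Ioc_insert_left hlt).symm
      rw [he, Finset.prod_insert (by rw [show j + 2 = (j+1) + 1 from rfl, Finset.Icc_add_one_left_eq_Ioc]; exact Finset.left_notMem_Ioc)]
      push_cast; ring_nf
    have hP2 : ∏ i ∈ Finset.Icc (j+2) (n+1), (a + (i:ℝ)) =
        (∏ i ∈ Finset.Icc (j+2) n, (a + (i:ℝ))) * (a + ((n:ℝ)+1)) := by
      rw [Finset.prod_Icc_succ_top (by omega)]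
      push_cast; ring_nf
    rw [hQm, hQ, hQ3, hQ, hP1, hP2, hcc]
    linear_combination ((∏ i ∈ Finset.Icc (j+2) n, (a + (i:ℝ))) *
      (∏ l ∈ Finset.Icc 1 j, (a + b + 1 + (n:ℝ) + (l:ℝ))) * (b + (n:ℝ) + 1)) * hch
  · have hjn : j = n := le_antisymm hj hge
    subst hjn
    have h0 : (j.choose (j+1) : ℝ) = 0 := by
      simp [Nat.choose_succ_self]
    have hcc2 : ((j+1).choose (j+1) : ℝ) = 1 := by simp
    have hP1e : ∏ i ∈ Finset.Icc (j+1) j, (a + (i:ℝ)) = 1 := by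
      rw [Finset.Icc_eq_empty (by omega)]; simp
    have hP2e : ∏ i ∈ Finset.Icc (j+2) (j+1), (a + (i:ℝ)) = 1 := by
      rw [Finset.Icc_eq_empty (by omega)]; simp
    rw [h0, hQ, hQ3, hQ, hcc2, hP1e, hP2e]
    simp only [Nat.choose_self, Nat.cast_one]
    push_cast
    ring

/-- Coefficient of `y^k` in `n! * P_n^{(a,b)}`. -/
noncomputable def Wc (a b : ℝ) (n k : ℕ) : ℝ :=
  (n.choose k : ℝ) * (∏ i ∈ Finset.Icc (k + 1) n, (a + (i : ℝ))) *
      (∏ l ∈ Finset.Icc 1 k, (a + b + (n : ℝ) + (l : ℝ)))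

lemma jacobiP_eq_sum (a b : ℝ) (n : ℕ) (x : ℝ) :
    jacobiP a b n x = (1 / (n.factorial : ℝ)) *
      ∑ k ∈ Finset.range (n + 1), Wc a b n k * ((x - 1) / 2) ^ k := rfl

lemma coefIdW (a b : ℝ) (n k : ℕ) (hk : k ≤ n + 1) :
    (a + b + 2*n + 2) * (Wc a (b+1) n k + (if k = 0 then 0 else Wc a (b+1) n (k-1)))
      = (b + n + 1) * Wc a b n k + Wc a b (n+1) k := by
  have hpc : ∀ m : ℕ, ∀ k : ℕ, ∏ l ∈ Finset.Icc 1 k, (a + (b+1) + (m:ℝ) + (l:ℝ))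
      = ∏ l ∈ Finset.Icc 1 k, (a + b + 1 + (m:ℝ) + (l:ℝ)) := by
    intro m k; exact Finset.prod_congr rfl fun l _ => by ring
  have hpc3 : ∀ k : ℕ, ∏ l ∈ Finset.Icc 1 k, (a + b + ((n+1 : ℕ):ℝ) + (l:ℝ))
      = ∏ l ∈ Finset.Icc 1 k, (a + b + ((n:ℝ)+1) + (l:ℝ)) := by
    intro k; exact Finset.prod_congr rfl fun l _ => by push_cast; ring
  match k with
  | 0 =>
    simp only [if_pos rfl, if_true, Wc, Nat.choose_zero_right, Nat.cast_one, Finset.Icc_eq_empty_of_lt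
      (by omega : (1:ℕ) > 0), Finset.prod_empty]
    have hP2 : ∏ i ∈ Finset.Icc (0+1) (n+1), (a + (i:ℝ)) =
        (∏ i ∈ Finset.Icc (0+1) n, (a + (i:ℝ))) * (a + ((n:ℝ)+1)) := by
      rw [Finset.prod_Icc_succ_top (by omega)]; push_cast; ring_nf
    rw [hP2]; simp; ring
  | (j+1) =>
    have hj : j ≤ n := by omega
    simp only [if_neg (Nat.succ_ne_zero j), Nat.succ_sub_one, Wc, hpc, hpc3]
    have := coefIdS a b n j hj
    push_cast
    push_cast at this
    linarith [this]

lemma Wc_top (a b : ℝ) (n : ℕ) : Wc a b n (n+1) = 0 := by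
  simp [Wc, Nat.choose_succ_self]

lemma contig (a b : ℝ) (n : ℕ) (x : ℝ) :
    (a + b + 2*n + 2) * ((1 + x) * jacobiP a (b+1) n x) =
      2*(b + n + 1) * jacobiP a b n x + 2*(n + 1) * jacobiP a b (n+1) x := by
  have hfac : ((n+1).factorial : ℝ) = ((n:ℝ)+1) * (n.factorial : ℝ) := by
    rw [Nat.factorial_succ]; push_cast; ring
  have hne : (n.factorial : ℝ) ≠ 0 := by positivity
  set y := (x - 1)/2 with hy
  rw [jacobiP_eq_sum, jacobiP_eq_sum, jacobiP_eq_sum]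
  rw [← hy]
  set c : ℝ := a + b + 2*(n:ℝ) + 2 with hc
  have hext1 : ∑ k ∈ Finset.range (n+1), Wc a (b+1) n k * y^k
      = ∑ k ∈ Finset.range (n+2), Wc a (b+1) n k * y^k := by
    conv_rhs => rw [Finset.sum_range_succ]
    rw [Wc_top]; ring
  have hext2 : ∑ k ∈ Finset.range (n+1), Wc a b n k * y^k
      = ∑ k ∈ Finset.range (n+2), Wc a b n k * y^k := by
    conv_rhs => rw [Finset.sum_range_succ]
    rw [Wc_top]; ring
  have hshift : ∑ k ∈ Finset.range (n+2),
      (if k = 0 then 0 else Wc a (b+1) n (k-1)) * y^k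
      = y * ∑ k ∈ Finset.range (n+1), Wc a (b+1) n k * y^k := by
    rw [Finset.sum_range_succ', Finset.mul_sum]
    simp only [Nat.succ_ne_zero, if_false, Nat.succ_sub_one, if_true, pow_zero, mul_one,
      zero_mul, add_zero]
    apply Finset.sum_congr rfl
    intro k _; ring
  have main : c * ((1 + x) * ∑ k ∈ Finset.range (n+1), Wc a (b+1) n k * y^k)
      = 2*(b+(n:ℝ)+1) * (∑ k ∈ Finset.range (n+1), Wc a b n k * y^k)
        + 2 * ∑ k ∈ Finset.range (n+2), Wc a b (n+1) k * y^k := by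
    have hx1 : (1 + x) = 2*(1+y) := by rw [hy]; ring
    rw [hx1, hext2]
    calc c * (2*(1+y) * ∑ k ∈ Finset.range (n+1), Wc a (b+1) n k * y^k)
        = 2 * c * (∑ k ∈ Finset.range (n+2), Wc a (b+1) n k * y^k)
          + 2 * c * (y * ∑ k ∈ Finset.range (n+1), Wc a (b+1) n k * y^k) := by
          rw [← hext1]; ring
      _ = ∑ k ∈ Finset.range (n+2), (2 * c * (Wc a (b+1) n k * y^k)
            + 2 * c * ((if k = 0 then 0 else Wc a (b+1) n (k-1)) * y^k)) := by
          rw [← hshift, Finset.sum_add_distrib, ← Finset.mul_sum, ← Finset.mul_sum]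
      _ = ∑ k ∈ Finset.range (n+2), (2*(b+(n:ℝ)+1) * (Wc a b n k * y^k)
            + 2 * (Wc a b (n+1) k * y^k)) := by
          apply Finset.sum_congr rfl
          intro k hk
          have hk' : k ≤ n + 1 := by
            have := Finset.mem_range.mp hk; omega
          have h := coefIdW a b n k hk'
          rw [hc]
          linear_combination (2 * y^k) * h
      _ = 2*(b+(n:ℝ)+1) * (∑ k ∈ Finset.range (n+2), Wc a b n k * y^k)
          + 2 * ∑ k ∈ Finset.range (n+2), Wc a b (n+1) k * y^k := by
          rw [Finset.sum_add_distrib, ← Finset.mul_sum, ← Finset.mul_sum]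
  calc c * ((1 + x) * ((1/(n.factorial:ℝ)) * ∑ k ∈ Finset.range (n+1), Wc a (b+1) n k * y^k))
      = (1/(n.factorial:ℝ)) * (c * ((1 + x) * ∑ k ∈ Finset.range (n+1), Wc a (b+1) n k * y^k)) := by
        ring
    _ = (1/(n.factorial:ℝ)) * (2*(b+(n:ℝ)+1) * (∑ k ∈ Finset.range (n+1), Wc a b n k * y^k)
        + 2 * ∑ k ∈ Finset.range (n+2), Wc a b (n+1) k * y^k) := by rw [main]
    _ = 2*(b + (n:ℝ) + 1) * ((1/(n.factorial:ℝ)) * ∑ k ∈ Finset.range (n+1), Wc a b n k * y^k)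
        + 2*((n:ℝ) + 1) * ((1/(((n+1).factorial:ℝ))) * ∑ k ∈ Finset.range (n+2), Wc a b (n+1) k * y^k) := by
        rw [hfac]; field_simp

lemma jacobiP_one (a b : ℝ) (m : ℕ) :
    jacobiP a b m 1 = (∏ i ∈ Finset.Icc 1 m, (a + (i:ℝ))) / (m.factorial : ℝ) := by
  rw [jacobiP_eq_sum]
  rw [Finset.sum_eq_single_of_mem 0 (Finset.mem_range.mpr (by omega))
    (fun k _ hk => by simp [zero_pow hk])]
  simp [Wc]
  ring

lemma expandLem (a : ℝ) (ha : 0 < a) (r : ℕ) : ∀ n : ℕ, ∃ c : ℕ → ℝ,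
    (∀ t, 0 ≤ c t) ∧ (∀ t, r < t → c t = 0) ∧
    ∀ x : ℝ, ((1+x)/2)^r * jacobiP a (1+(r:ℝ)) n x
      = ∑ t ∈ Finset.range (r+1), c t * jacobiP a 1 (n+t) x := by
  induction r with
  | zero =>
    intro n
    refine ⟨fun t => if t = 0 then 1 else 0, fun t => by positivity, fun t ht => if_neg (by omega), fun x => by simp⟩
  | succ r ih =>
    intro n
    obtain ⟨c1, h1n, h1s, h1e⟩ := ih n
    obtain ⟨c2, h2n, h2s, h2e⟩ := ih (n+1)
    set D : ℝ := a + (1+(r:ℝ)) + 2*(n:ℝ) + 2 with hDdef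
    have hD : 0 < D := by positivity
    set lam1 : ℝ := ((1+(r:ℝ)) + (n:ℝ) + 1)/D with hl1
    set lam2 : ℝ := ((n:ℝ) + 1)/D with hl2
    have hlam1 : 0 ≤ lam1 := by positivity
    have hlam2 : 0 ≤ lam2 := by positivity
    refine ⟨fun t => lam1 * c1 t + lam2 * (if t = 0 then 0 else c2 (t-1)), ?_, ?_, ?_⟩
    · intro t
      show 0 ≤ lam1 * c1 t + lam2 * (if t = 0 then 0 else c2 (t-1))
      have : 0 ≤ (if t = 0 then 0 else c2 (t-1)) := by
        split <;> [exact le_refl 0; exact h2n _]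
      have := mul_nonneg hlam2 this
      have := mul_nonneg hlam1 (h1n t)
      positivity
    · intro t ht
      show lam1 * c1 t + lam2 * (if t = 0 then 0 else c2 (t-1)) = 0
      have e1 : c1 t = 0 := h1s t (by omega)
      have e2 : (if t = 0 then 0 else c2 (t-1)) = 0 := by
        rw [if_neg (by omega)]
        exact h2s _ (by omega)
      rw [e1, e2]; ring
    · intro x
      show ((1+x)/2)^(r+1) * jacobiP a (1+((r+1:ℕ):ℝ)) n x = ∑ t ∈ Finset.range (r+1+1),
        (lam1 * c1 t + lam2 * (if t = 0 then 0 else c2 (t-1))) * jacobiP a 1 (n+t) x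
      have hcont := contig a (1+(r:ℝ)) n x
      have hstep : ((1+x)/2) * jacobiP a (1+((r+1:ℕ):ℝ)) n x
          = lam1 * jacobiP a (1+(r:ℝ)) n x + lam2 * jacobiP a (1+(r:ℝ)) (n+1) x := by
        have h1 : (1:ℝ) + ((r+1:ℕ):ℝ) = (1+(r:ℝ)) + 1 := by push_cast; ring
        rw [h1, hl1, hl2, hDdef]
        field_simp
        linarith [hcont]
      calc ((1+x)/2)^(r+1) * jacobiP a (1+((r+1:ℕ):ℝ)) n x
          = ((1+x)/2)^r * (((1+x)/2) * jacobiP a (1+((r+1:ℕ):ℝ)) n x) := by ring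
        _ = lam1 * (((1+x)/2)^r * jacobiP a (1+(r:ℝ)) n x)
            + lam2 * (((1+x)/2)^r * jacobiP a (1+(r:ℝ)) (n+1) x) := by rw [hstep]; ring
        _ = lam1 * ∑ t ∈ Finset.range (r+1), c1 t * jacobiP a 1 (n+t) x
            + lam2 * ∑ t ∈ Finset.range (r+1), c2 t * jacobiP a 1 ((n+1)+t) x := by
            rw [h1e x, h2e x]
        _ = ∑ t ∈ Finset.range (r+2),
              (lam1 * c1 t + lam2 * (if t = 0 then 0 else c2 (t-1))) * jacobiP a 1 (n+t) x := by
            have hA : ∑ t ∈ Finset.range (r+2), lam1 * c1 t * jacobiP a 1 (n+t) x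
                = lam1 * ∑ t ∈ Finset.range (r+1), c1 t * jacobiP a 1 (n+t) x := by
              rw [Finset.sum_range_succ, h1s (r+1) (by omega), Finset.mul_sum]
              simp [mul_assoc]
            have hB : ∑ t ∈ Finset.range (r+2),
                lam2 * (if t = 0 then 0 else c2 (t-1)) * jacobiP a 1 (n+t) x
                = lam2 * ∑ t ∈ Finset.range (r+1), c2 t * jacobiP a 1 ((n+1)+t) x := by
              rw [Finset.sum_range_succ', Finset.mul_sum]
              simp only [Nat.succ_ne_zero, if_false, Nat.succ_sub_one, if_true, mul_zero,
                zero_mul, add_zero]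
              apply Finset.sum_congr rfl
              intro t _
              rw [show n + (t+1) = (n+1) + t by omega]
              ring
            rw [Finset.sum_congr rfl (fun t _ => add_mul _ _ _), Finset.sum_add_distrib, hA, hB]

lemma jacobiP_one_pos (a : ℝ) (ha : 0 < a) (b : ℝ) (m : ℕ) : 0 < jacobiP a b m 1 := by
  rw [jacobiP_one]
  apply div_pos
  · exact Finset.prod_pos fun i _ => by positivity
  · exact_mod_cast Nat.factorial_pos m

lemma jacobiP_one_mono (a : ℝ) (ha : 0 < a) (b : ℝ) (m t : ℕ) :
    jacobiP a b m 1 ≤ jacobiP a b (m + t) 1 := by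
  induction t with
  | zero => exact le_refl _
  | succ t ih =>
    refine le_trans ih ?_
    rw [jacobiP_one, jacobiP_one, show m + (t+1) = (m+t) + 1 by omega]
    rw [Finset.prod_Icc_succ_top (by omega), Nat.factorial_succ]
    set s := m + t
    set P := ∏ i ∈ Finset.Icc 1 s, (a + (i:ℝ)) with hP
    have hPpos : 0 < P := Finset.prod_pos fun i _ => by positivity
    have hfpos : (0:ℝ) < (s.factorial : ℝ) := by exact_mod_cast Nat.factorial_pos s
    rw [div_le_div_iff₀ hfpos (by push_cast; positivity)]
    push_cast
    have h1 : ((s:ℝ)+1) ≤ (a + ((s:ℝ)+1)) := by linarith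
    calc P * (((s:ℝ)+1) * (s.factorial:ℝ)) = (((s:ℝ)+1) * P) * (s.factorial:ℝ) := by ring
      _ ≤ ((a + ((s:ℝ)+1)) * P) * (s.factorial:ℝ) := by
          apply mul_le_mul_of_nonneg_right _ hfpos.le
          exact mul_le_mul_of_nonneg_right h1 hPpos.le
      _ = P * (a + ((s:ℝ)+1)) * (s.factorial:ℝ) := by ring

lemma Hmat_expand {m : ℕ} (d : ℕ) (hd : 8 ≤ d) (hd4 : ∃ k : ℕ, d = 4 * k)
    (C : ℝ → Matrix (Fin m) (Fin m) ℝ)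
    (hcont : ∀ i j, ContinuousOn (fun θ => C θ i j) (Set.Icc 0 Real.pi)) :
    ∃ c : ℕ → ℕ → ℝ, (∀ n t, 0 ≤ c n t) ∧ (∀ n t, c n t ≤ 1) ∧
      ∀ n i j, Hmat (((d:ℝ)-2)/2) (((d:ℝ)-2)/2) C n i j
        = ∑ t ∈ Finset.range ((d-4)/2 + 1),
            c n t * Hmat (((d:ℝ)-2)/2) 1 C (n+t) i j := by
  set a : ℝ := ((d:ℝ)-2)/2 with hadef
  set r : ℕ := (d-4)/2 with hrdef
  have hdR : (8:ℝ) ≤ (d:ℝ) := by exact_mod_cast hd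
  have ha : 0 < a := by rw [hadef]; linarith
  have har : a = 1 + (r:ℝ) := by
    obtain ⟨k, hk⟩ := hd4
    have hk2 : 2 ≤ k := by omega
    have h1 : r = 2*k - 2 := by omega
    have h2 : ((2*k-2 : ℕ):ℝ) = 2*(k:ℝ) - 2 := by
      push_cast [Nat.cast_sub (by omega : 2 ≤ 2*k)]; ring
    rw [hadef, h1, h2, hk]
    push_cast
    ring
  choose c hc0 hcs hce using expandLem a ha r
  have hc1 : ∀ n t, c n t ≤ 1 := by
    intro n t
    rcases Nat.lt_or_ge r t with h | h
    · rw [hcs n t h]; norm_num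
    · have hid := hce n 1
      rw [show ((1:ℝ)+1)/2 = 1 by norm_num, one_pow, one_mul] at hid
      have hEn : jacobiP a (1+(r:ℝ)) n 1 = jacobiP a 1 n 1 := by
        rw [jacobiP_one, jacobiP_one]
      have hmem : t ∈ Finset.range (r+1) := Finset.mem_range.mpr (by omega)
      have hle : c n t * jacobiP a 1 (n+t) 1 ≤ jacobiP a 1 n 1 := by
        rw [← hEn, hid]
        exact Finset.single_le_sum
          (fun s _ => mul_nonneg (hc0 n s) (jacobiP_one_pos a ha 1 (n+s)).le) hmem
      have h2 : jacobiP a 1 n 1 ≤ jacobiP a 1 (n+t) 1 := jacobiP_one_mono a ha 1 n t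
      have h3 : 0 < jacobiP a 1 (n+t) 1 := jacobiP_one_pos a ha 1 (n+t)
      nlinarith [hc0 n t]
  refine ⟨c, hc0, hc1, ?_⟩
  intro n i j
  have hd1 : 1 ≤ d := by omega
  have hdr : d - 1 = 3 + 2*r := by
    obtain ⟨k, hk⟩ := hd4; omega
  have hexpS : ∀ θ:ℝ, Real.sin (θ/2) ^ (2*a+1) = Real.sin (θ/2) ^ ((d-1 : ℕ)) := by
    intro θ
    rw [hadef, show (2:ℝ) * (((d:ℝ)-2)/2) + 1 = (((d-1:ℕ)):ℝ) by
      push_cast [Nat.cast_sub hd1]; ring, Real.rpow_natCast]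
  have hexpC : ∀ θ:ℝ, Real.cos (θ/2) ^ (2*a+1) = Real.cos (θ/2) ^ ((d-1 : ℕ)) := by
    intro θ
    rw [hadef, show (2:ℝ) * (((d:ℝ)-2)/2) + 1 = (((d-1:ℕ)):ℝ) by
      push_cast [Nat.cast_sub hd1]; ring, Real.rpow_natCast]
  have hexp1 : ∀ θ:ℝ, Real.cos (θ/2) ^ ((2:ℝ)*1+1) = Real.cos (θ/2) ^ (3:ℕ) := by
    intro θ; rw [show (2:ℝ)*1+1 = ((3:ℕ):ℝ) by norm_num, Real.rpow_natCast]
  have key : ∀ θ : ℝ,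
      C θ i j * jacobiP a a n (Real.cos θ) * Real.sin (θ/2) ^ (2*a+1)
          * Real.cos (θ/2) ^ (2*a+1)
      = ∑ t ∈ Finset.range (r+1), c n t *
          (C θ i j * jacobiP a 1 (n+t) (Real.cos θ) * Real.sin (θ/2) ^ (2*a+1)
            * Real.cos (θ/2) ^ ((2:ℝ)*1+1)) := by
    intro θ
    have hcos2 : Real.cos (θ/2)^2 = (1 + Real.cos θ)/2 := by
      have := Real.cos_sq (θ/2); rw [show 2*(θ/2) = θ by ring] at this; linarith
    have hsplit : Real.cos (θ/2) ^ (2*a+1)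
        = Real.cos (θ/2) ^ (3:ℕ) * ((1 + Real.cos θ)/2)^r := by
      rw [hexpC θ, hdr, pow_add, pow_mul, hcos2]
    have hj : ((1 + Real.cos θ)/2)^r * jacobiP a a n (Real.cos θ)
        = ∑ t ∈ Finset.range (r+1), c n t * jacobiP a 1 (n+t) (Real.cos θ) := by
      have h := hce n (Real.cos θ)
      rw [← har] at h; exact h
    calc C θ i j * jacobiP a a n (Real.cos θ) * Real.sin (θ/2) ^ (2*a+1)
          * Real.cos (θ/2) ^ (2*a+1)
        = (((1 + Real.cos θ)/2)^r * jacobiP a a n (Real.cos θ)) *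
            (C θ i j * Real.sin (θ/2) ^ (2*a+1) * Real.cos (θ/2) ^ (3:ℕ)) := by
          rw [hsplit]; ring
      _ = (∑ t ∈ Finset.range (r+1), c n t * jacobiP a 1 (n+t) (Real.cos θ)) *
            (C θ i j * Real.sin (θ/2) ^ (2*a+1) * Real.cos (θ/2) ^ (3:ℕ)) := by rw [hj]
      _ = ∑ t ∈ Finset.range (r+1), c n t *
          (C θ i j * jacobiP a 1 (n+t) (Real.cos θ) * Real.sin (θ/2) ^ (2*a+1)
            * Real.cos (θ/2) ^ ((2:ℝ)*1+1)) := by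
          rw [Finset.sum_mul]
          exact Finset.sum_congr rfl fun t _ => by rw [hexp1 θ]; ring
  have hInt : ∀ t ∈ Finset.range (r+1), IntervalIntegrable
      (fun θ => c n t * (C θ i j * jacobiP a 1 (n+t) (Real.cos θ)
        * Real.sin (θ/2) ^ (2*a+1) * Real.cos (θ/2) ^ ((2:ℝ)*1+1)))
      MeasureTheory.volume 0 Real.pi := by
    intro t _
    apply ContinuousOn.intervalIntegrable
    rw [Set.uIcc_of_le Real.pi_pos.le]
    have hS : Continuous (fun θ:ℝ => Real.sin (θ/2) ^ (2*a+1)) := by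
      have he : (fun θ:ℝ => Real.sin (θ/2) ^ (2*a+1))
          = fun θ => Real.sin (θ/2) ^ (d-1:ℕ) := funext hexpS
      rw [he]; fun_prop
    have hC3 : Continuous (fun θ:ℝ => Real.cos (θ/2) ^ ((2:ℝ)*1+1)) := by
      have he : (fun θ:ℝ => Real.cos (θ/2) ^ ((2:ℝ)*1+1))
          = fun θ => Real.cos (θ/2) ^ (3:ℕ) := funext hexp1
      rw [he]; fun_prop
    have hJ : Continuous (fun θ:ℝ => jacobiP a 1 (n+t) (Real.cos θ)) := by
      have hc : Continuous (fun x:ℝ => jacobiP a 1 (n+t) x) := by unfold jacobiP; fun_prop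
      exact hc.comp Real.continuous_cos
    exact continuous_const.continuousOn.mul
      ((((hcont i j).mul hJ.continuousOn).mul hS.continuousOn).mul hC3.continuousOn)
  calc Hmat a a C n i j
      = ∫ θ in (0:ℝ)..Real.pi, ∑ t ∈ Finset.range (r+1), c n t *
          (C θ i j * jacobiP a 1 (n+t) (Real.cos θ) * Real.sin (θ/2) ^ (2*a+1)
            * Real.cos (θ/2) ^ ((2:ℝ)*1+1)) := by
        show (∫ θ in (0:ℝ)..Real.pi, C θ i j * jacobiP a a n (Real.cos θ)
          * Real.sin (θ/2) ^ (2*a+1) * Real.cos (θ/2) ^ (2*a+1)) = _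
        exact intervalIntegral.integral_congr (fun θ _ => key θ)
    _ = ∑ t ∈ Finset.range (r+1), ∫ θ in (0:ℝ)..Real.pi, c n t *
          (C θ i j * jacobiP a 1 (n+t) (Real.cos θ) * Real.sin (θ/2) ^ (2*a+1)
            * Real.cos (θ/2) ^ ((2:ℝ)*1+1)) :=
        intervalIntegral.integral_finset_sum hInt
    _ = ∑ t ∈ Finset.range (r+1), c n t * Hmat a 1 C (n+t) i j := by
        refine Finset.sum_congr rfl fun t _ => ?_
        rw [intervalIntegral.integral_const_mul]
        rfl

lemma qsingle {m : ℕ} (A : Matrix (Fin m) (Fin m) ℝ) (i j : Fin m) :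
    (Pi.single i 1 : Fin m → ℝ) ⬝ᵥ A.mulVec (Pi.single j 1) = A i j := by
  simp [dotProduct, mulVec, Pi.single_apply]

lemma PSD_diag {m : ℕ} {A : Matrix (Fin m) (Fin m) ℝ} (hA : PSD A) (i : Fin m) :
    0 ≤ A i i := by
  have := hA (Pi.single i 1)
  rwa [qsingle] at this

lemma PSD_offdiag {m : ℕ} {A : Matrix (Fin m) (Fin m) ℝ} (hA : PSD A) {i j : Fin m}
    (hsym : A i j = A j i) : |A i j| ≤ (A i i + A j j)/2 := by
  have e1 : ∀ u w : Fin m → ℝ, (u + w) ⬝ᵥ A.mulVec (u + w)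
      = u ⬝ᵥ A.mulVec u + u ⬝ᵥ A.mulVec w + w ⬝ᵥ A.mulVec u + w ⬝ᵥ A.mulVec w := by
    intro u w
    rw [Matrix.mulVec_add, dotProduct_add, add_dotProduct, add_dotProduct]
    ring
  have e2 : ∀ u w : Fin m → ℝ, (u - w) ⬝ᵥ A.mulVec (u - w)
      = u ⬝ᵥ A.mulVec u - u ⬝ᵥ A.mulVec w - w ⬝ᵥ A.mulVec u + w ⬝ᵥ A.mulVec w := by
    intro u w
    rw [Matrix.mulVec_sub, dotProduct_sub, sub_dotProduct, sub_dotProduct]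
    ring
  have h1 := hA (Pi.single i 1 + Pi.single j 1)
  have h2 := hA (Pi.single i 1 - Pi.single j 1)
  rw [e1] at h1
  rw [e2] at h2
  rw [qsingle, qsingle, qsingle, qsingle] at h1 h2
  rw [hsym] at h1 h2
  rw [abs_le]
  constructor <;> linarith

lemma Hmat_symm {m : ℕ} (a b : ℝ) (C : ℝ → Matrix (Fin m) (Fin m) ℝ)
    (hsym : ∀ θ ∈ Set.Icc (0:ℝ) Real.pi, (C θ)ᵀ = C θ) (n : ℕ) (i j : Fin m) :
    Hmat a b C n i j = Hmat a b C n j i := by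
  show (∫ θ in (0:ℝ)..Real.pi, C θ i j * jacobiP a b n (Real.cos θ)
      * Real.sin (θ/2) ^ (2*a+1) * Real.cos (θ/2) ^ (2*b+1)) = _
  apply intervalIntegral.integral_congr
  intro θ hθ
  rw [Set.uIcc_of_le Real.pi_pos.le] at hθ
  have hC : C θ i j = C θ j i := by
    conv_lhs => rw [← hsym θ hθ]
    rfl
  simp only [hC]

lemma qf_sum {m : ℕ} {ι : Type*} (s : Finset ι) (A : ι → Matrix (Fin m) (Fin m) ℝ)
    (v : Fin m → ℝ) :
    v ⬝ᵥ (∑ t ∈ s, A t).mulVec v = ∑ t ∈ s, v ⬝ᵥ (A t).mulVec v := by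
  classical
  induction s using Finset.induction_on with
  | empty => simp
  | @insert x s hx ih =>
    rw [Finset.sum_insert hx, Finset.sum_insert hx, Matrix.add_mulVec, dotProduct_add, ih]


/-- Theorem 2(iii): a covariance structure on the quaternionic projective space
P^d(ℍ) transfers to the sphere S^d, stated via the Theorem-1 characterization. -/
theorem stmt9 (m : ℕ) (hm : 1 ≤ m) (d : ℕ) (hd : 8 ≤ d) (hd4 : ∃ k : ℕ, d = 4 * k)
    (C : ℝ → Matrix (Fin m) (Fin m) ℝ)
    (hsym : ∀ θ ∈ Set.Icc (0:ℝ) Real.pi, (C θ)ᵀ = C θ)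
    (hcont : ∀ i j, ContinuousOn (fun θ => C θ i j) (Set.Icc 0 Real.pi))
    (hyp : (∀ n, PSD (Hmat (((d : ℝ) - 2) / 2) 1 C n)) ∧
      (∀ i j, SeriesConv fun n =>
        ((n : ℝ) + 1) ^ ((((d : ℝ) - 2) / 2) + 1) *
          Hmat (((d : ℝ) - 2) / 2) 1 C (n + 1) i j)) :
    (∀ n, PSD (Hmat (((d : ℝ) - 2) / 2) (((d : ℝ) - 2) / 2) C n)) ∧
      (∀ i j, SeriesConv fun n =>
        ((n : ℝ) + 1) ^ ((((d : ℝ) - 2) / 2) + 1) *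
          Hmat (((d : ℝ) - 2) / 2) (((d : ℝ) - 2) / 2) C (n + 1) i j) := by
  obtain ⟨hPSD1, hSer1⟩ := hyp
  obtain ⟨c, hc0, hc1, hexp⟩ := Hmat_expand d hd hd4 C hcont
  set r : ℕ := (d - 4)/2 with hrdef
  have hMsum : ∀ n, Hmat (((d:ℝ)-2)/2) (((d:ℝ)-2)/2) C n
      = ∑ t ∈ Finset.range (r+1), c n t • Hmat (((d:ℝ)-2)/2) 1 C (n+t) := by
    intro n
    ext i j
    rw [hexp n i j]
    simp [Matrix.sum_apply]
  constructor
  · intro n v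
    rw [hMsum n, qf_sum]
    apply Finset.sum_nonneg
    intro t _
    rw [Matrix.smul_mulVec, dotProduct_smul, smul_eq_mul]
    exact mul_nonneg (hc0 n t) (hPSD1 (n+t) v)
  · intro i j
    set gp : ℕ → ℝ := fun nn => ((nn:ℝ) + 1) ^ ((((d:ℝ)-2)/2) + 1) with hgp
    have hgp0 : ∀ nn, 0 ≤ gp nn := fun nn => Real.rpow_nonneg (by positivity) _
    have hsumdiag : ∀ i0 : Fin m,
        Summable (fun nn => gp nn * Hmat (((d:ℝ)-2)/2) 1 C (nn+1) i0 i0) := by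
      intro i0
      obtain ⟨L, hL⟩ := hSer1 i0 i0
      have hnn : ∀ nn, 0 ≤ gp nn * Hmat (((d:ℝ)-2)/2) 1 C (nn+1) i0 i0 :=
        fun nn => mul_nonneg (hgp0 nn) (PSD_diag (hPSD1 (nn+1)) i0)
      apply summable_of_sum_range_le hnn
      intro N
      have hmono : Monotone (fun N => ∑ n ∈ Finset.range N,
          gp n * Hmat (((d:ℝ)-2)/2) 1 C (n+1) i0 i0) := by
        intro p q hpq
        exact Finset.sum_le_sum_of_subset_of_nonneg (Finset.range_subset_range.mpr hpq)
          (fun k _ _ => hnn k)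
      exact hmono.ge_of_tendsto hL N
    have habs : ∀ nn, |Hmat (((d:ℝ)-2)/2) 1 C nn i j|
        ≤ (Hmat (((d:ℝ)-2)/2) 1 C nn i i + Hmat (((d:ℝ)-2)/2) 1 C nn j j)/2 :=
      fun nn => PSD_offdiag (hPSD1 nn) (Hmat_symm _ _ C hsym nn i j)
    have husum : Summable (fun nn => gp nn * |Hmat (((d:ℝ)-2)/2) 1 C (nn+1) i j|) := by
      have hg : Summable (fun nn => (gp nn * Hmat (((d:ℝ)-2)/2) 1 C (nn+1) i i
          + gp nn * Hmat (((d:ℝ)-2)/2) 1 C (nn+1) j j)/2) :=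
        ((hsumdiag i).add (hsumdiag j)).div_const 2
      refine Summable.of_nonneg_of_le
        (fun nn => mul_nonneg (hgp0 nn) (abs_nonneg _)) (fun nn => ?_) hg
      have := mul_le_mul_of_nonneg_left (habs (nn+1)) (hgp0 nn)
      linarith [this]
    have hshift : ∀ t : ℕ,
        Summable (fun nn => gp (nn+t) * |Hmat (((d:ℝ)-2)/2) 1 C (nn+t+1) i j|) :=
      fun t => (summable_nat_add_iff t).mpr husum
    have hsums : ∀ s : ℕ, Summable (fun nn => ∑ t ∈ Finset.range s,
        gp (nn+t) * |Hmat (((d:ℝ)-2)/2) 1 C (nn+t+1) i j|) := by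
      intro s
      induction s with
      | zero => simpa using summable_zero
      | succ s ih => simpa only [Finset.sum_range_succ] using ih.add (hshift s)
    have hb : ∀ nn, |gp nn * Hmat (((d:ℝ)-2)/2) (((d:ℝ)-2)/2) C (nn+1) i j|
        ≤ ∑ t ∈ Finset.range (r+1), gp (nn+t) * |Hmat (((d:ℝ)-2)/2) 1 C (nn+t+1) i j| := by
      intro nn
      rw [hexp (nn+1) i j]
      calc |gp nn * ∑ t ∈ Finset.range (r+1),
            c (nn+1) t * Hmat (((d:ℝ)-2)/2) 1 C (nn+1+t) i j|
          = gp nn * |∑ t ∈ Finset.range (r+1),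
            c (nn+1) t * Hmat (((d:ℝ)-2)/2) 1 C (nn+1+t) i j| := by
            rw [abs_mul, abs_of_nonneg (hgp0 nn)]
        _ ≤ gp nn * ∑ t ∈ Finset.range (r+1),
            |c (nn+1) t * Hmat (((d:ℝ)-2)/2) 1 C (nn+1+t) i j| :=
            mul_le_mul_of_nonneg_left (Finset.abs_sum_le_sum_abs _ _) (hgp0 nn)
        _ = ∑ t ∈ Finset.range (r+1),
            gp nn * |c (nn+1) t * Hmat (((d:ℝ)-2)/2) 1 C (nn+1+t) i j| := Finset.mul_sum _ _ _
        _ ≤ ∑ t ∈ Finset.range (r+1),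
            gp (nn+t) * |Hmat (((d:ℝ)-2)/2) 1 C (nn+t+1) i j| := by
            apply Finset.sum_le_sum
            intro t _
            rw [show nn+1+t = nn+t+1 by omega]
            rw [abs_mul]
            have hc : |c (nn+1) t| ≤ 1 := by
              rw [abs_of_nonneg (hc0 _ _)]; exact hc1 _ _
            have h1 : gp nn * (|c (nn+1) t| * |Hmat (((d:ℝ)-2)/2) 1 C (nn+t+1) i j|)
                ≤ gp nn * |Hmat (((d:ℝ)-2)/2) 1 C (nn+t+1) i j| := by
              apply mul_le_mul_of_nonneg_left _ (hgp0 nn)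
              calc |c (nn+1) t| * |Hmat (((d:ℝ)-2)/2) 1 C (nn+t+1) i j|
                  ≤ 1 * |Hmat (((d:ℝ)-2)/2) 1 C (nn+t+1) i j| :=
                    mul_le_mul_of_nonneg_right hc (abs_nonneg _)
                _ = _ := one_mul _
            refine le_trans h1 ?_
            apply mul_le_mul_of_nonneg_right _ (abs_nonneg _)
            rw [hgp]
            apply Real.rpow_le_rpow (by positivity) _ (by
              have : (8:ℝ) ≤ (d:ℝ) := by exact_mod_cast hd
              linarith)
            push_cast
            linarith [Nat.cast_nonneg (α := ℝ) t]
    have hbsum : Summable (fun nn => gp nn *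
        Hmat (((d:ℝ)-2)/2) (((d:ℝ)-2)/2) C (nn+1) i j) := by
      apply Summable.of_norm_bounded (hsums (r+1))
      intro nn
      rw [Real.norm_eq_abs]
      exact hb nn
    exact ⟨∑' nn, gp nn * Hmat (((d:ℝ)-2)/2) (((d:ℝ)-2)/2) C (nn+1) i j,
      hbsum.hasSum.tendsto_sum_nat⟩
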